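/- One has (2/π)·∫₀^∞ ∫₀^∞ ( 1 − Re(√((x + iy)² − 1))/x )² dx dy = 1 − log 2, where √ denotes the principal branch of the complex square root and Re the real part. -/

import Mathlib

open MeasureTheory

open Real Set Complex

set_option maxHeartbeats 1000000
noncomputable section

-- the complex "strip" point
lemma cosh_strip (u v : ℝ) :
    Complex.cosh (u + v * Complex.I) =
      (Real.cosh u * Real.cos v : ℝ) + Complex.I * (Real.sinh u * Real.sin v : ℝ) := by
  rw [Complex.cosh_add, Complex.cosh_mul_I, Complex.sinh_mul_I]
  push_cast [← Complex.ofReal_cosh, ← Complex.ofReal_sinh, ← Complex.ofReal_cos,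
    ← Complex.ofReal_sin]
  ring

lemma sinh_strip (u v : ℝ) :
    Complex.sinh (u + v * Complex.I) =
      (Real.sinh u * Real.cos v : ℝ) + Complex.I * (Real.cosh u * Real.sin v : ℝ) := by
  rw [Complex.sinh_add, Complex.cosh_mul_I, Complex.sinh_mul_I]
  push_cast [← Complex.ofReal_cosh, ← Complex.ofReal_sinh, ← Complex.ofReal_cos,
    ← Complex.ofReal_sin]
  ring

lemma sqrt_key {u v : ℝ} (hu : 0 < u) (hv1 : 0 < v) (hv2 : v < Real.pi / 2) :
    ((Complex.cosh (u + v * Complex.I)) ^ 2 - 1) ^ ((1 : ℂ)/2)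
      = Complex.sinh (u + v * Complex.I) := by
  have hre : 0 < (Complex.sinh (u + v * Complex.I)).re := by
    rw [sinh_strip]
    simp only [Complex.add_re, Complex.ofReal_re, Complex.mul_re, Complex.I_re, Complex.I_im,
      Complex.ofReal_im, Complex.ofReal_re]
    have : 0 < Real.sinh u * Real.cos v := by
      apply mul_pos (Real.sinh_pos_iff.2 hu)
      exact Real.cos_pos_of_mem_Ioo ⟨by linarith [Real.pi_pos], hv2⟩
    simpa using this
  have h1 : (Complex.cosh (u + v * Complex.I)) ^ 2 - 1
      = (Complex.sinh (u + v * Complex.I)) ^ (2 : ℕ) := by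
    have := Complex.cosh_sq_sub_sinh_sq (u + v * Complex.I)
    push_cast
    linear_combination this
  rw [h1, one_div, Complex.sq_cpow_two_inv hre]

/-- the change-of-variables map, in `(y, x)` order -/
def Phi (p : ℝ × ℝ) : ℝ × ℝ :=
  (Real.sinh p.1 * Real.sin p.2, Real.cosh p.1 * Real.cos p.2)

def S : Set (ℝ × ℝ) := Set.Ioi (0:ℝ) ×ˢ Set.Ioo (0:ℝ) (Real.pi/2)

lemma S_meas : MeasurableSet S := measurableSet_Ioi.prod measurableSet_Ioo

lemma Phi_inj : Set.InjOn Phi S := by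
  rintro ⟨u1, v1⟩ ⟨hu1, hv1, hv1'⟩ ⟨u2, v2⟩ ⟨hu2, hv2, hv2'⟩ h
  simp only [Phi, Prod.mk.injEq] at h
  have hcosh : Complex.cosh (u1 + v1 * Complex.I) = Complex.cosh (u2 + v2 * Complex.I) := by
    rw [cosh_strip, cosh_strip, h.1, h.2]
  have hsinh : Complex.sinh (u1 + v1 * Complex.I) = Complex.sinh (u2 + v2 * Complex.I) := by
    rw [← sqrt_key hu1 hv1 hv1', ← sqrt_key hu2 hv2 hv2', hcosh]
  have hexp : Complex.exp (u1 + v1 * Complex.I) = Complex.exp (u2 + v2 * Complex.I) := by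
    rw [← Complex.cosh_add_sinh, ← Complex.cosh_add_sinh, hcosh, hsinh]
  rw [Complex.exp_eq_exp_iff_exists_int] at hexp
  obtain ⟨n, hn⟩ := hexp
  have him : v1 = v2 + n * (2 * Real.pi) := by
    have := congrArg Complex.im hn
    simpa [Complex.add_im, Complex.mul_im] using this
  have hn0 : n = 0 := by
    by_contra hne
    have h1 : (1:ℝ) ≤ |(n:ℝ)| := by
      have h2 : (1:ℤ) ≤ |n| := Int.one_le_abs hne
      calc (1:ℝ) ≤ ((|n| : ℤ) : ℝ) := by exact_mod_cast h2
        _ = |(n:ℝ)| := by push_cast; ring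
    have hb : |v1 - v2| < Real.pi / 2 := by
      rw [abs_sub_lt_iff]; constructor <;> linarith
    have : |v1 - v2| = |(n:ℝ)| * (2 * Real.pi) := by
      rw [him]; rw [show v2 + n * (2*Real.pi) - v2 = n * (2*Real.pi) by ring,
        abs_mul, abs_of_pos (by positivity : (0:ℝ) < 2 * Real.pi)]
    nlinarith [Real.pi_gt_three, abs_nonneg ((n:ℝ))]
  have hv : v1 = v2 := by simp [hn0] at him; exact him
  have hu : u1 = u2 := by
    have := congrArg Complex.re hn
    simp [hn0, Complex.add_im, Complex.mul_im] at this
    simpa using this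
  simp [hu, hv]

lemma Phi_image : Phi '' S = Set.Ioi (0:ℝ) ×ˢ Set.Ioi (0:ℝ) := by
  apply Set.Subset.antisymm
  · rintro _ ⟨⟨u, v⟩, ⟨hu, hv, hv'⟩, rfl⟩
    have hcos : 0 < Real.cos v := Real.cos_pos_of_mem_Ioo ⟨by linarith [Real.pi_pos], hv'⟩
    have hsin : 0 < Real.sin v := Real.sin_pos_of_pos_of_lt_pi hv (by linarith [Real.pi_pos])
    exact ⟨mul_pos (Real.sinh_pos_iff.2 hu) hsin, mul_pos (Real.cosh_pos _) hcos⟩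
  · rintro ⟨y, x⟩ ⟨hy, hx⟩
    simp only [Set.mem_Ioi] at hy hx
    set r1 : ℝ := Real.sqrt ((x+1)^2 + y^2) with hr1def
    set r2 : ℝ := Real.sqrt ((x-1)^2 + y^2) with hr2def
    have hr1sq : r1^2 = (x+1)^2 + y^2 := Real.sq_sqrt (by positivity)
    have hr2sq : r2^2 = (x-1)^2 + y^2 := Real.sq_sqrt (by positivity)
    have hr1n : 0 ≤ r1 := Real.sqrt_nonneg _
    have hr2n : 0 ≤ r2 := Real.sqrt_nonneg _
    have hr1gt : x + 1 < r1 := by nlinarith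
    have hr2gt : x - 1 < r2 := by nlinarith
    have hr2ge : 1 - x ≤ r2 := by nlinarith
    set p : ℝ := (r1 + r2)/2 with hpdef
    set q : ℝ := (r1 - r2)/2 with hqdef
    have hp1 : 1 < p := by simp only [hpdef]; linarith
    have hq1 : q < 1 := by nlinarith
    have hq0 : 0 < q := by nlinarith
    have hpq : p * q = x := by linear_combination (hr1sq - hr2sq)/4
    have hprod : (p^2 - 1) * (1 - q^2) = y^2 := by
      linear_combination (1/2 - (r1^2 - r2^2 + 4*x)/16) * hr1sq
        + (1/2 + (r1^2 - r2^2 + 4*x)/16) * hr2sq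
    refine ⟨(Real.arsinh (Real.sqrt (p^2 - 1)), Real.arccos q), ⟨?_, ?_, ?_⟩, ?_⟩
    · exact Real.arsinh_pos_iff.2 (Real.sqrt_pos.2 (by nlinarith))
    · exact Real.arccos_pos.2 hq1
    · exact Real.arccos_lt_pi_div_two.2 hq0
    · have hch : Real.cosh (Real.arsinh (Real.sqrt (p^2-1))) = p := by
        rw [Real.cosh_arsinh, Real.sq_sqrt (by nlinarith : (0:ℝ) ≤ p^2 - 1)]
        rw [show 1 + (p^2 - 1) = p^2 by ring, Real.sqrt_sq (by linarith)]
      have hsh : Real.sinh (Real.arsinh (Real.sqrt (p^2-1))) = Real.sqrt (p^2-1) :=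
        Real.sinh_arsinh _
      have hcos : Real.cos (Real.arccos q) = q := Real.cos_arccos (by linarith) hq1.le
      have hsin : Real.sin (Real.arccos q) = Real.sqrt (1 - q^2) := Real.sin_arccos q
      simp only [Phi, hch, hsh, hcos, hsin, Prod.mk.injEq]
      constructor
      · rw [← Real.sqrt_mul (by nlinarith : (0:ℝ) ≤ p^2-1), hprod, Real.sqrt_sq hy.le]
      · rw [hpq]

def B (p : ℝ × ℝ) : ℝ × ℝ →L[ℝ] ℝ × ℝ :=
  LinearMap.toContinuousLinearMap (Matrix.toLin (Module.Basis.finTwoProd ℝ) (Module.Basis.finTwoProd ℝ)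
    !![Real.cosh p.1 * Real.sin p.2, Real.sinh p.1 * Real.cos p.2;
       Real.sinh p.1 * Real.cos p.2, -(Real.cosh p.1 * Real.sin p.2)])

lemma hasFDerivAt_Phi (p : ℝ × ℝ) : HasFDerivAt Phi (B p) p := by
  unfold Phi B
  rw [Matrix.toLin_finTwoProd_toContinuousLinearMap]
  convert! HasFDerivAt.prodMk (𝕜 := ℝ)
    (((Real.hasDerivAt_sinh p.1).comp_hasFDerivAt p hasFDerivAt_fst).mul
      ((Real.hasDerivAt_sin p.2).comp_hasFDerivAt p hasFDerivAt_snd))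
    (((Real.hasDerivAt_cosh p.1).comp_hasFDerivAt p hasFDerivAt_fst).mul
      ((Real.hasDerivAt_cos p.2).comp_hasFDerivAt p hasFDerivAt_snd)) using 2 <;>
  simp [smul_smul, add_comm, mul_comm, neg_mul, smul_neg,
    neg_smul _ (ContinuousLinearMap.snd ℝ ℝ ℝ)]

lemma B_det (p : ℝ × ℝ) : (B p).det = -(Real.sinh p.1 ^ 2 + Real.sin p.2 ^ 2) := by
  unfold B
  simp only [LinearMap.det_toContinuousLinearMap, LinearMap.det_toLin, Matrix.det_fin_two_of]
  linear_combination (-Real.sin p.2 ^ 2) * Real.cosh_sq p.1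
    + (-Real.sinh p.1 ^ 2) * Real.sin_sq_add_cos_sq p.2

def g (u : ℝ) : ℝ :=
  (1 - Real.tanh u)^2 * (Real.pi/2 * Real.sinh u ^ 2 + Real.pi/4)

lemma exp_facts (u : ℝ) :
    Real.sinh u = (1/Real.exp (-u) - Real.exp (-u))/2 ∧
    Real.tanh u = (1 - Real.exp (-u)^2)/(1 + Real.exp (-u)^2) := by
  have ht : 0 < Real.exp (-u) := Real.exp_pos _
  have he : Real.exp u = 1 / Real.exp (-u) := by
    rw [Real.exp_neg]; field_simp
  constructor
  · rw [Real.sinh_eq, he]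
  · rw [Real.tanh_eq_sinh_div_cosh, Real.sinh_eq, Real.cosh_eq, he]
    rw [div_eq_div_iff (by positivity) (by positivity)]
    field_simp

lemma g_eq (u : ℝ) :
    g u = Real.pi/2 * Real.exp (-2*u) * (1 + Real.exp (-2*u)^2) / (1 + Real.exp (-2*u))^2 := by
  obtain ⟨hs, ht⟩ := exp_facts u
  have ht0 : 0 < Real.exp (-u) := Real.exp_pos _
  have h2 : Real.exp (-2*u) = Real.exp (-u)^2 := by
    rw [sq, ← Real.exp_add]; ring_nf
  rw [g, hs, ht, h2]
  have h1 : (0:ℝ) < 1 + Real.exp (-u)^2 := by positivity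
  field_simp
  ring

def G (u : ℝ) : ℝ :=
  -(Real.pi/4) * Real.exp (-2*u) + Real.pi/2 * Real.log (1 + Real.exp (-2*u))
    + Real.pi/2 / (1 + Real.exp (-2*u))

lemma hasDerivAt_G (u : ℝ) : HasDerivAt G (g u) u := by
  have hexp : HasDerivAt (fun u : ℝ => Real.exp (-2*u)) (-2 * Real.exp (-2*u)) u := by
    have h1 : HasDerivAt (fun u : ℝ => -2*u) (-2) u := by
      simpa using (hasDerivAt_id u).const_mul (-2)
    simpa [mul_comm] using h1.exp
  have hs0 : 0 < Real.exp (-2*u) := Real.exp_pos _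
  have hs1 : (0:ℝ) < 1 + Real.exp (-2*u) := by positivity
  have h1 : HasDerivAt (fun u : ℝ => 1 + Real.exp (-2*u)) (-2 * Real.exp (-2*u)) u := by
    exact hexp.const_add 1
  have hG : HasDerivAt G
      (-(Real.pi/4) * (-2 * Real.exp (-2*u))
        + Real.pi/2 * ((-2 * Real.exp (-2*u)) / (1 + Real.exp (-2*u)))
        + Real.pi/2 * -((-2 * Real.exp (-2*u)) / (1 + Real.exp (-2*u))^2)) u := by
    have hinv := (h1.inv hs1.ne').const_mul (Real.pi/2)
    have hlog := (h1.log hs1.ne').const_mul (Real.pi/2)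
    have hfirst := hexp.const_mul (-(Real.pi/4))
    have := (hfirst.add hlog).add hinv
    refine (this.congr_deriv (by ring)).congr_of_eventuallyEq ?_
    exact Filter.Eventually.of_forall fun y => by simp only [G, Pi.add_apply, Pi.inv_apply]; ring
  convert hG using 1
  rw [g_eq]
  field_simp
  ring

lemma g_cont : Continuous g := by
  unfold g
  have htanh : Continuous Real.tanh := by
    have : Real.tanh = fun x => Real.sinh x / Real.cosh x := by
      funext x; exact Real.tanh_eq_sinh_div_cosh x
    rw [this]
    exact Real.continuous_sinh.div Real.continuous_cosh fun x => (Real.cosh_pos x).ne'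
  exact ((continuous_const.sub htanh).pow 2).mul
    ((continuous_const.mul (Real.continuous_sinh.pow 2)).add continuous_const)

lemma g_integrable : IntegrableOn g (Set.Ioi (0:ℝ)) := by
  apply Integrable.mono' (g := fun u => Real.pi * Real.exp (-2*u))
    ((exp_neg_integrableOn_Ioi 0 (by norm_num)).const_mul Real.pi)
    g_cont.aestronglyMeasurable
  filter_upwards with u
  rw [Real.norm_eq_abs, g_eq]
  rw [show |Real.pi / 2 * Real.exp (-2*u) * (1 + Real.exp (-2*u) ^ 2) / (1 + Real.exp (-2*u)) ^ 2| = Real.pi / 2 * Real.exp (-2*u) * (1 + Real.exp (-2*u) ^ 2) / (1 + Real.exp (-2*u)) ^ 2 from abs_of_nonneg (by positivity)]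
  have hs0 : 0 < Real.exp (-2*u) := Real.exp_pos _
  have hs1 : (0:ℝ) < 1 + Real.exp (-2*u) := by positivity
  rw [div_le_iff₀ (by positivity)]
  have key : 0 ≤ Real.pi * Real.exp (-2*u) * (1 + 4*Real.exp (-2*u) + Real.exp (-2*u)^2) := by
    positivity
  nlinarith [key]

lemma tendsto_G : Filter.Tendsto G Filter.atTop (nhds (Real.pi/2)) := by
  have hexp : Filter.Tendsto (fun u : ℝ => Real.exp (-2*u)) Filter.atTop (nhds 0) := by
    apply Real.tendsto_exp_atBot.comp
    apply Filter.Tendsto.const_mul_atTop_of_neg (by norm_num : (-2:ℝ) < 0) Filter.tendsto_id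
  have h1 : Filter.Tendsto (fun u : ℝ => -(Real.pi/4) * Real.exp (-2*u)) Filter.atTop
      (nhds 0) := by simpa using hexp.const_mul (-(Real.pi/4))
  have h2 : Filter.Tendsto (fun u : ℝ => Real.pi/2 * Real.log (1 + Real.exp (-2*u)))
      Filter.atTop (nhds 0) := by
    have : Filter.Tendsto (fun u : ℝ => Real.log (1 + Real.exp (-2*u))) Filter.atTop
        (nhds (Real.log 1)) :=
      ((Real.continuousAt_log (by norm_num)).tendsto.comp (by simpa using hexp.const_add 1))
    simpa using this.const_mul (Real.pi/2)
  have h3 : Filter.Tendsto (fun u : ℝ => Real.pi/2 / (1 + Real.exp (-2*u))) Filter.atTop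
      (nhds (Real.pi/2)) := by
    have : Filter.Tendsto (fun u : ℝ => 1 + Real.exp (-2*u)) Filter.atTop (nhds 1) := by
      simpa using hexp.const_add 1
    have h' := (tendsto_const_nhds (x := Real.pi/2)).div this (by norm_num)
    rw [div_one] at h'
    exact h'
  have h4 := (h1.add h2).add h3
  simp only [zero_add] at h4
  exact h4

lemma integral_g : ∫ u in Set.Ioi (0:ℝ), g u = Real.pi/2 - Real.pi/2 * Real.log 2 := by
  have h := integral_Ioi_of_hasDerivAt_of_tendsto' (f := G) (f' := g) (a := 0)
    (fun x _ => hasDerivAt_G x) g_integrable tendsto_G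
  rw [h]
  have : G 0 = Real.pi/2 * Real.log 2 := by
    unfold G
    norm_num
    ring
  rw [this]

def h (p : ℝ × ℝ) : ℝ :=
  (Real.sinh p.1 ^ 2 + Real.sin p.2 ^ 2) * (1 - Real.tanh p.1)^2

lemma one_sub_tanh (u : ℝ) : 1 - Real.tanh u = Real.exp (-u) / Real.cosh u := by
  rw [Real.tanh_eq_sinh_div_cosh]
  rw [eq_div_iff (Real.cosh_pos u).ne', sub_mul, one_mul, div_mul_cancel₀ _ (Real.cosh_pos u).ne']
  linear_combination Real.cosh_sub_sinh u

lemma h_cont : Continuous h := by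
  unfold h
  have htanh : Continuous Real.tanh := by
    have : Real.tanh = fun x => Real.sinh x / Real.cosh x := by
      funext x; exact Real.tanh_eq_sinh_div_cosh x
    rw [this]
    exact Real.continuous_sinh.div Real.continuous_cosh fun x => (Real.cosh_pos x).ne'
  exact (((Real.continuous_sinh.comp continuous_fst).pow 2).add
    ((Real.continuous_sin.comp continuous_snd).pow 2)).mul
    ((continuous_const.sub (htanh.comp continuous_fst)).pow 2)

lemma h_bound (p : ℝ × ℝ) : ‖h p‖ ≤ 2 * Real.exp (-2 * p.1) := by
  obtain ⟨u, v⟩ := p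
  have hc : (0:ℝ) < Real.cosh u := Real.cosh_pos u
  have he2 : Real.exp (-2*u) = Real.exp (-u)^2 := by
    rw [sq, ← Real.exp_add]; ring_nf
  have hnn : 0 ≤ h (u, v) := by
    unfold h; positivity
  rw [Real.norm_eq_abs, _root_.abs_of_nonneg hnn]
  unfold h
  simp only
  rw [one_sub_tanh, div_pow, ← mul_div_assoc, div_le_iff₀ (by positivity), he2]
  nlinarith [Real.cosh_sq u, Real.sin_sq_le_one v, sq_nonneg (Real.sinh u),
    sq_nonneg (Real.exp (-u)), Real.exp_pos (-u), sq_nonneg (Real.sinh u * Real.exp (-u)),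
    sq_nonneg (Real.exp (-u) * Real.sin v)]

lemma h_integrableOn : IntegrableOn h S := by
  apply Integrable.mono' (g := fun p : ℝ × ℝ => 2 * Real.exp (-2 * p.1))
  · -- integrability of dominating function on S
    have h1 : Integrable (fun u : ℝ => 2 * Real.exp (-2*u)) (volume.restrict (Set.Ioi 0)) :=
      (exp_neg_integrableOn_Ioi 0 (by norm_num)).const_mul 2
    have h2 : Integrable (fun _ : ℝ => (1:ℝ))
        (volume.restrict (Set.Ioo 0 (Real.pi/2))) :=
      integrableOn_const measure_Ioo_lt_top.ne
    have h3 := h1.mul_prod h2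
    rw [Measure.prod_restrict, ← Measure.volume_eq_prod] at h3
    simpa [S, IntegrableOn] using h3
  · exact (h_cont.aestronglyMeasurable).restrict
  · filter_upwards with p using h_bound p

lemma inner_v_integral (u : ℝ) :
    ∫ v in Set.Ioo (0:ℝ) (Real.pi/2), h (u, v) = g u := by
  unfold h g
  simp only
  rw [← integral_Ioc_eq_integral_Ioo,
    ← intervalIntegral.integral_of_le (by positivity : (0:ℝ) ≤ Real.pi/2)]
  have hint : ∫ v in (0:ℝ)..(Real.pi/2),
      (Real.sinh u ^ 2 + Real.sin v ^ 2) * (1 - Real.tanh u)^2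
      = ((Real.pi/2) * Real.sinh u ^ 2 + Real.pi/4) * (1 - Real.tanh u)^2 := by
    rw [intervalIntegral.integral_mul_const]
    congr 1
    rw [intervalIntegral.integral_add (g := fun v : ℝ => Real.sin v ^ 2) (intervalIntegrable_const)
      ((Real.continuous_sin.pow 2).intervalIntegrable _ _)]
    rw [intervalIntegral.integral_const, integral_sin_sq]
    simp [Real.sin_pi_div_two, Real.cos_pi_div_two]
    ring
  rw [hint]; ring

def F (p : ℝ × ℝ) : ℝ :=
  (1 - ((((p.2 : ℂ) + Complex.I * (p.1 : ℂ)) ^ 2 - 1) ^ ((1 : ℂ)/2)).re / p.2) ^ 2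

lemma F_Phi : ∀ p ∈ S, |(B p).det| • F (Phi p) = h p := by
  rintro ⟨u, v⟩ ⟨hu, hv, hv'⟩
  have hcosv : 0 < Real.cos v := Real.cos_pos_of_mem_Ioo ⟨by linarith [Real.pi_pos], hv'⟩
  have habs : |(B (u,v)).det| = Real.sinh u ^ 2 + Real.sin v ^ 2 := by
    rw [B_det, abs_neg, _root_.abs_of_nonneg (by positivity)]
  have hF : F (Phi (u, v)) = (1 - Real.tanh u)^2 := by
    unfold F Phi
    simp only
    rw [← cosh_strip, sqrt_key hu hv hv', sinh_strip]
    have hre : ((((Real.sinh u * Real.cos v : ℝ)) : ℂ)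
        + Complex.I * ((Real.cosh u * Real.sin v : ℝ) : ℂ)).re
        = Real.sinh u * Real.cos v := by
      simp [Complex.add_re, Complex.mul_re, Complex.sinh_ofReal_re, Complex.cos_ofReal_re,
        Complex.sinh_ofReal_im, Complex.cos_ofReal_im]
    rw [hre]
    congr 2
    rw [Real.tanh_eq_sinh_div_cosh, mul_div_mul_right _ _ hcosv.ne']
  show |(B (u,v)).det| • F (Phi (u,v)) = h (u,v)
  rw [habs, hF, smul_eq_mul]
  rfl

/-- Normalization `𝒟(1) = 1` of the second-order ring-diagram function: for the isotropic 2DEG,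
`(2/π)·∫₀^∞∫₀^∞ (1 − Re√((x+iy)² − 1)/x)² dx dy = 1 − log 2`, where `√` is the principal
branch of the complex square root. -/
theorem ring_diagram_normalization :
    (2 / Real.pi) *
        ∫ y in Set.Ioi (0 : ℝ), ∫ x in Set.Ioi (0 : ℝ),
          (1 - ((((x : ℂ) + Complex.I * (y : ℂ)) ^ 2 - 1) ^ ((1 : ℂ) / 2)).re / x) ^ 2
      = 1 - Real.log 2 := by
  have hderiv : ∀ p ∈ S, HasFDerivWithinAt Phi (B p) S p := fun p _ =>
    (hasFDerivAt_Phi p).hasFDerivWithinAt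
  have hQ : Set.Ioi (0:ℝ) ×ˢ Set.Ioi (0:ℝ) = Phi '' S := Phi_image.symm
  have hFInt : IntegrableOn F (Set.Ioi (0:ℝ) ×ˢ Set.Ioi (0:ℝ)) := by
    rw [hQ, integrableOn_image_iff_integrableOn_abs_det_fderiv_smul volume S_meas hderiv
      Phi_inj F]
    exact (h_integrableOn.congr_fun (fun p hp => (F_Phi p hp).symm) S_meas : _)
  have hSInt : IntegrableOn h (Set.Ioi (0:ℝ) ×ˢ Set.Ioo (0:ℝ) (Real.pi/2)) := h_integrableOn
  have key : ∫ p in Set.Ioi (0:ℝ) ×ˢ Set.Ioi (0:ℝ), F p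
      = Real.pi/2 - Real.pi/2 * Real.log 2 := by
    rw [hQ, integral_image_eq_integral_abs_det_fderiv_smul volume S_meas hderiv Phi_inj F,
      setIntegral_congr_fun S_meas F_Phi]
    show ∫ p in Set.Ioi (0:ℝ) ×ˢ Set.Ioo (0:ℝ) (Real.pi/2), h p = _
    rw [Measure.volume_eq_prod] at hSInt ⊢
    rw [setIntegral_prod _ hSInt]
    rw [show (fun u => ∫ v in Set.Ioo (0:ℝ) (Real.pi/2), h (u, v)) = g from
      funext inner_v_integral]
    exact integral_g
  have hiter : ∫ y in Set.Ioi (0 : ℝ), ∫ x in Set.Ioi (0 : ℝ),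
      (1 - ((((x : ℂ) + Complex.I * (y : ℂ)) ^ 2 - 1) ^ ((1 : ℂ) / 2)).re / x) ^ 2
      = ∫ p in Set.Ioi (0:ℝ) ×ˢ Set.Ioi (0:ℝ), F p := by
    rw [Measure.volume_eq_prod] at hFInt ⊢
    rw [setIntegral_prod F hFInt]
    rfl
  rw [hiter, key]
  have hpi : Real.pi ≠ 0 := Real.pi_ne_zero
  field_simp
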